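/- To each hp-run v with shortest period p one can assign at least 2 inter-positions (handles) within v, such that the handle sets of distinct hp-runs are disjoint; consequently the number of hp-runs in a word of length n is at most (n-1)/2. -/

import Mathlib

def HasPeriodOn {A : Type*} (u : ℕ → A) (i j p : ℕ) : Prop :=
  ∀ k, i ≤ k → k + p ≤ j → u k = u (k + p)

def IsRunWith {A : Type*} (u : ℕ → A) (n i j p : ℕ) : Prop :=
  i ≤ j ∧ j < n ∧ 1 ≤ p ∧ HasPeriodOn u i j p ∧
    (∀ q, 1 ≤ q → q < p → ¬ HasPeriodOn u i j q) ∧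
    2 * p ≤ j - i + 1 ∧
    (i = 0 ∨ u (i - 1) ≠ u (i - 1 + p)) ∧
    (j + 1 = n ∨ u (j + 1 - p) ≠ u (j + 1))

def IsHPRun {A : Type*} (u : ℕ → A) (n i j : ℕ) : Prop :=
  ∃ p, IsRunWith u n i j p ∧ 3 * p ≤ j - i + 1

namespace HPAux

variable {A : Type*}

/-- A "handle certificate" at inter-position `k` with period `p`:
there is a square of period `p` ending and starting at `k`, and (if `p ≥ 2`)
the right half is an unbordered word. -/
def Handle (u : ℕ → A) (k p : ℕ) : Prop :=
  1 ≤ p ∧ p ≤ k ∧ (∀ l < p, u (k - p + l) = u (k + l)) ∧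
    (p = 1 ∨ ∀ t, 0 < t → t < p → ∃ l < t, u (k + l) ≠ u (k + (p - t) + l))

lemma handle_not_lt {u : ℕ → A} {k p p' : ℕ}
    (h : Handle u k p) (h' : Handle u k p') (hlt : p < p') : False := by
  obtain ⟨hp1, hpk, hsq, _⟩ := h
  obtain ⟨hp1', hpk', hsq', hub'⟩ := h'
  have hub := hub'.resolve_left (by omega)
  obtain ⟨l, hl, hne⟩ := hub p (by omega) hlt
  apply hne
  have e1 : u (k - p + l) = u (k + l) := hsq l hl
  have e2 : u (k - p' + (p' - p + l)) = u (k + (p' - p + l)) := hsq' _ (by omega)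
  have e3 : k - p' + (p' - p + l) = k - p + l := by omega
  have e4 : k + (p' - p + l) = k + (p' - p) + l := by omega
  rw [e3, e4] at e2
  rw [← e1, e2]

/-- Two maximal runs with the same period overlapping in a full period window
coincide. -/
lemma runs_eq_of_overlap {u : ℕ → A} {n i j i' j' p m : ℕ}
    (h : IsRunWith u n i j p) (h' : IsRunWith u n i' j' p)
    (h1 : i ≤ m) (h2 : m + p ≤ j + 1) (h3 : i' ≤ m) (h4 : m + p ≤ j' + 1) :
    i = i' ∧ j = j' := by
  have hle : ∀ (i j i' j' : ℕ), IsRunWith u n i j p → IsRunWith u n i' j' p →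
      i ≤ m → i' ≤ m → m + p ≤ j' + 1 → i' ≤ i → i = i' := by
    intro i j i' j' h h' h1 h3 h4 hle
    rcases Nat.eq_or_lt_of_le hle with he | hlt
    · omega
    · exfalso
      obtain ⟨_, _, hp1, _, _, _, hmaxl, _⟩ := h
      obtain ⟨_, _, _, hper', _, _, _, _⟩ := h'
      have : u (i - 1) = u (i - 1 + p) := hper' (i - 1) (by omega) (by omega)
      rcases hmaxl with h0 | hne
      · omega
      · exact hne this
  have hi : i = i' := by
    rcases Nat.le_total i' i with hc | hc
    · exact hle i j i' j' h h' h1 h3 h4 hc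
    · exact (hle i' j' i j h' h h3 h1 h2 hc).symm
  subst hi
  have hjle : ∀ (j j' : ℕ), IsRunWith u n i j p → IsRunWith u n i j' p →
      j ≤ j' → j = j' := by
    intro j j' h h' hlej
    rcases Nat.eq_or_lt_of_le hlej with he | hlt
    · exact he
    · exfalso
      obtain ⟨hij, hjn, hp1, hper, _, hlen, _, hmaxr⟩ := h
      obtain ⟨_, hjn', _, hper', _, _, _, _⟩ := h'
      have he : u (j + 1 - p) = u (j + 1 - p + p) := hper' (j + 1 - p) (by omega) (by omega)
      have e : j + 1 - p + p = j + 1 := by omega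
      rw [e] at he
      rcases hmaxr with h0 | hne
      · omega
      · exact hne he
  rcases Nat.le_total j j' with hc | hc
  · exact ⟨rfl, hjle j j' h h' hc⟩
  · exact ⟨rfl, (hjle j' j h' h hc).symm⟩

/-! ### Periodic extension on `ZMod p` -/

def phi (u : ℕ → A) (i p : ℕ) : ZMod p → A := fun x => u (i + x.val)

def Iword (u : ℕ → A) (i p : ℕ) (x : ZMod p) : ℕ → A :=
  fun m => phi u i p (x + (m : ZMod p))

lemma uval {u : ℕ → A} {i j p : ℕ} (hp : 1 ≤ p) (hper : HasPeriodOn u i j p) :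
    ∀ d, i + d ≤ j → u (i + d) = phi u i p (d : ZMod p) := by
  haveI : NeZero p := ⟨by omega⟩
  intro d
  induction d using Nat.strong_induction_on with
  | _ d IH =>
    intro hd
    rcases Nat.lt_or_ge d p with h | h
    · unfold phi
      rw [ZMod.val_natCast_of_lt h]
    · have h1 : u (i + (d - p)) = u (i + (d - p) + p) :=
        hper (i + (d - p)) (by omega) (by omega)
      have h2 := IH (d - p) (by omega) (by omega)
      have hcast : ((d - p : ℕ) : ZMod p) = (d : ZMod p) := by
        conv_rhs => rw [show d = (d - p) + p by omega]
        push_cast [ZMod.natCast_self]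
        ring
      have e : i + (d - p) + p = i + d := by omega
      rw [← hcast, ← h2, ← e, ← h1]

lemma Iword_shift (u : ℕ → A) (i p : ℕ) (x : ZMod p) (t m : ℕ) :
    Iword u i p x (t + m) = Iword u i p (x + (t : ZMod p)) m := by
  unfold Iword
  congr 1
  push_cast
  ring

lemma shift_of_Iword_eq {u : ℕ → A} {i p : ℕ} [NeZero p] {x y : ZMod p}
    (h : Iword u i p x = Iword u i p y) :
    ∀ z : ZMod p, phi u i p (z + (y - x)) = phi u i p z := by
  intro z
  obtain ⟨m, hm⟩ : ∃ m : ℕ, (m : ZMod p) = z - x := ⟨(z - x).val, ZMod.natCast_rightInverse _⟩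
  have h1 := congrFun h m
  unfold Iword at h1
  have e1 : x + (m : ZMod p) = z := by rw [hm]; ring
  have e2 : y + (m : ZMod p) = z + (y - x) := by rw [hm]; ring
  rw [e1, e2] at h1
  exact h1.symm

lemma no_shift {u : ℕ → A} {n i j p t : ℕ} (hrun : IsRunWith u n i j p)
    (h1 : 1 ≤ t) (h2 : t < p)
    (hshift : ∀ y : ZMod p, phi u i p (y + (t : ZMod p)) = phi u i p y) : False := by
  obtain ⟨hij, hjn, hp, hper, hmin, hlen, _, _⟩ := hrun
  haveI : NeZero p := ⟨by omega⟩
  set d := Nat.gcd t p with hd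
  have hd1 : 1 ≤ d := Nat.gcd_pos_of_pos_left _ (by omega)
  have hdp : d < p := lt_of_le_of_lt (Nat.gcd_le_left _ (by omega)) h2
  let H : AddSubgroup (ZMod p) :=
    { carrier := {s | ∀ y, phi u i p (y + s) = phi u i p y}
      zero_mem' := by intro y; rw [add_zero]
      add_mem' := by
        intro s s' hs hs' y
        have : y + (s + s') = (y + s) + s' := by ring
        rw [this, hs' (y + s), hs y]
      neg_mem' := by
        intro s hs y
        have := hs (y + -s)
        rw [show y + -s + s = y by ring] at this
        exact this.symm }
  have ht : (t : ZMod p) ∈ H := hshift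
  have hdm : (d : ZMod p) ∈ H := by
    have hb := Nat.gcd_eq_gcd_ab t p
    have h3 : (d : ZMod p) = Nat.gcdA t p • (t : ZMod p) := by
      have : ((d : ℤ) : ZMod p) = ((t * Nat.gcdA t p + p * Nat.gcdB t p : ℤ) : ZMod p) := by
        rw [← hb]
      push_cast [ZMod.natCast_self] at this
      rw [zsmul_eq_mul]
      rw [this]
      ring
    rw [h3]
    exact zsmul_mem ht _
  have hpd : HasPeriodOn u i j d := by
    intro m hm hmd
    have e1 : u m = phi u i p ((m - i : ℕ) : ZMod p) := by
      have := uval hp hper (m - i) (by omega)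
      rwa [show i + (m - i) = m by omega] at this
    have e2 : u (m + d) = phi u i p ((m - i + d : ℕ) : ZMod p) := by
      have := uval hp hper (m - i + d) (by omega)
      rwa [show i + (m - i + d) = m + d by omega] at this
    rw [e1, e2]
    have : ((m - i + d : ℕ) : ZMod p) = ((m - i : ℕ) : ZMod p) + (d : ZMod p) := by push_cast; ring
    rw [this, hdm]
  exact hmin d hd1 hdp hpd

/-! ### Lexicographic order on infinite words -/

section Lex

variable [LinearOrder A]

def LexLe (a b : ℕ → A) : Prop :=
  ∀ m, (∀ l < m, a l = b l) → a m ≤ b m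

lemma lexLe_refl (a : ℕ → A) : LexLe a a := fun _ _ => le_rfl

lemma lexLe_total (a b : ℕ → A) : LexLe a b ∨ LexLe b a := by
  by_cases h : LexLe a b
  · exact Or.inl h
  · right
    unfold LexLe at h
    push_neg at h
    obtain ⟨m, hpre, hm⟩ := h
    intro m' hpre'
    rcases lt_trichotomy m' m with h1 | rfl | h1
    · exact (hpre m' h1).ge
    · exact hm.le
    · exact absurd (hpre' m h1) (ne_of_lt hm)

lemma lexLe_antisymm {a b : ℕ → A} (h1 : LexLe a b) (h2 : LexLe b a) : a = b := by
  funext m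
  induction m using Nat.strong_induction_on with
  | _ m IH =>
    exact le_antisymm (h1 m (fun l hl => IH l hl)) (h2 m (fun l hl => (IH l hl).symm))

lemma lexLe_trans {a b c : ℕ → A} (hab : LexLe a b) (hbc : LexLe b c) : LexLe a c := by
  intro m hac
  have key : ∀ l, l < m → a l = b l ∧ b l = c l := by
    intro l hl
    induction l using Nat.strong_induction_on with
    | _ l IH =>
      have h1 : a l ≤ b l := hab l (fun l' h => (IH l' h (h.trans hl)).1)
      have h2 : b l ≤ c l := hbc l (fun l' h => (IH l' h (h.trans hl)).2)
      have h3 : a l = c l := hac l hl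
      constructor
      · exact le_antisymm h1 (h2.trans h3.symm.le)
      · exact le_antisymm h2 (h3.symm.le.trans h1)
  exact le_trans (hab m (fun l hl => (key l hl).1)) (hbc m (fun l hl => (key l hl).2))

lemma lexLe_of_agree {a b : ℕ → A} (t : ℕ) (hpre : ∀ l < t, a l = b l)
    (htail : LexLe (fun m => a (t + m)) (fun m => b (t + m))) : LexLe a b := by
  intro m hm
  rcases Nat.lt_or_ge m t with h | h
  · exact (hpre m h).le
  · obtain ⟨m', rfl⟩ : ∃ m', m = t + m' := ⟨m - t, by omega⟩
    exact htail m' (fun l hl => hm (t + l) (by omega))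

lemma exists_lexLe_min {ι : Type*} [Fintype ι] [Nonempty ι] (f : ι → ℕ → A) :
    ∃ x, ∀ y, LexLe (f x) (f y) := by
  classical
  have aux : ∀ s : Finset ι, s.Nonempty → ∃ x ∈ s, ∀ y ∈ s, LexLe (f x) (f y) := by
    intro s hs
    induction s using Finset.induction_on with
    | empty => exact absurd hs (by simp)
    | insert a s ha IH =>
      rcases s.eq_empty_or_nonempty with rfl | hsne
      · exact ⟨a, by simp, by simp [lexLe_refl]⟩
      · obtain ⟨x₀, hx₀s, hx₀⟩ := IH hsne
        rcases lexLe_total (f x₀) (f a) with hc | hc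
        · refine ⟨x₀, Finset.mem_insert_of_mem hx₀s, ?_⟩
          intro y hy
          rcases Finset.mem_insert.mp hy with rfl | hy
          · exact hc
          · exact hx₀ y hy
        · refine ⟨a, Finset.mem_insert_self a s, ?_⟩
          intro y hy
          rcases Finset.mem_insert.mp hy with rfl | hy
          · exact lexLe_refl _
          · exact lexLe_trans hc (hx₀ y hy)
  obtain ⟨x, _, hx⟩ := aux Finset.univ Finset.univ_nonempty
  exact ⟨x, fun y => hx y (Finset.mem_univ y)⟩

end Lex

end HPAux

namespace HPAux

variable {A : Type*}

section Core

variable [LinearOrder A]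

lemma handle_of_min {u : ℕ → A} {n i j p : ℕ} (hrun : IsRunWith u n i j p)
    (hp2 : 2 ≤ p) (hcube : 3 * p ≤ j - i + 1) {x₀ : ZMod p}
    (hx₀ : ∀ y, LexLe (Iword u i p x₀) (Iword u i p y)) :
    Handle u (i + x₀.val + p) p := by
  haveI : NeZero p := ⟨by omega⟩
  obtain ⟨hij, hjn, hp1, hper, hmin, hlen, _, _⟩ := id hrun
  have hvlt : x₀.val < p := ZMod.val_lt x₀
  have hj : i + 3 * p - 1 ≤ j := by omega
  set k := i + x₀.val + p with hk
  have huk : ∀ d, i + d ≤ j → u (i + d) = phi u i p (d : ZMod p) := uval hp1 hper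
  refine ⟨by omega, by omega, ?_, Or.inr ?_⟩
  · intro l hl
    have e1 : u (k - p + l) = phi u i p ((x₀.val + l : ℕ) : ZMod p) := by
      have := huk (x₀.val + l) (by omega)
      rwa [show i + (x₀.val + l) = k - p + l by omega] at this
    have e2 : u (k + l) = phi u i p ((x₀.val + p + l : ℕ) : ZMod p) := by
      have := huk (x₀.val + p + l) (by omega)
      rwa [show i + (x₀.val + p + l) = k + l by omega] at this
    rw [e1, e2]
    congr 1
    push_cast [ZMod.natCast_self]
    ring
  · intro t ht0 htp
    by_contra hcon
    push_neg at hcon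
    -- express the border condition with Iword
    have hIw : ∀ l : ℕ, x₀.val + p + l ≤ 3 * p - 2 → u (k + l) = Iword u i p x₀ l := by
      intro l hlb
      have := huk (x₀.val + p + l) (by omega)
      rw [show i + (x₀.val + p + l) = k + l by omega] at this
      rw [this]
      unfold Iword
      congr 1
      push_cast [ZMod.natCast_self]
      rw [ZMod.natCast_rightInverse x₀]
      ring
    have hpre : ∀ l < t, Iword u i p x₀ l = Iword u i p (x₀ - (t : ZMod p)) l := by
      intro l hl
      have e1 : u (k + l) = Iword u i p x₀ l := hIw l (by omega)
      have e2 : u (k + (p - t) + l) = phi u i p ((x₀.val + p + (p - t) + l : ℕ) : ZMod p) := by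
        have := huk (x₀.val + p + (p - t) + l) (by omega)
        rwa [show i + (x₀.val + p + (p - t) + l) = k + (p - t) + l by omega] at this
      have e3 : ((x₀.val + p + (p - t) + l : ℕ) : ZMod p) = (x₀ - (t : ZMod p)) + (l : ZMod p) := by
        push_cast [ZMod.natCast_self, Nat.cast_sub htp.le]
        rw [ZMod.natCast_rightInverse x₀]
        ring
      have := hcon l hl
      rw [e1, e2, e3] at this
      exact this
    have h1 : LexLe (Iword u i p (x₀ - (t : ZMod p))) (Iword u i p x₀) := by
      apply lexLe_of_agree t (fun l hl => (hpre l hl).symm)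
      have e1 : (fun m => Iword u i p (x₀ - (t : ZMod p)) (t + m)) = Iword u i p x₀ := by
        funext m
        rw [Iword_shift]
        congr 1
        ring
      have e2 : (fun m => Iword u i p x₀ (t + m)) = Iword u i p (x₀ + (t : ZMod p)) := by
        funext m
        rw [Iword_shift]
      rw [e1, e2]
      exact hx₀ _
    have heq : Iword u i p x₀ = Iword u i p (x₀ - (t : ZMod p)) :=
      lexLe_antisymm (hx₀ _) h1
    have hsh := shift_of_Iword_eq heq
    have hshift : ∀ y : ZMod p, phi u i p (y + (t : ZMod p)) = phi u i p y := by
      intro y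
      have := hsh (y + (t : ZMod p))
      rw [show y + (t : ZMod p) + (x₀ - (t : ZMod p) - x₀) = y by ring] at this
      exact this.symm
    exact no_shift hrun ht0 htp hshift

lemma lexLe_dual {a b : ℕ → A} (h : LexLe (A := Aᵒᵈ) a b) : LexLe b a := by
  intro m hm
  exact h m (fun l hl => (hm l hl).symm)

end Core

lemma exists_handles (u : ℕ → A) {n i j : ℕ} (h : IsHPRun u n i j) :
    ∃ s : Finset ℕ, 2 ≤ s.card ∧ (∀ k ∈ s, i < k ∧ k ≤ j) ∧
      ∃ p, IsRunWith u n i j p ∧ ∀ k ∈ s, Handle u k p ∧ i + p ≤ k ∧ k + p ≤ j + 1 := by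
  classical
  obtain ⟨p, hrun, hcube⟩ := h
  obtain ⟨hij, hjn, hp1, hper, hmin, hlen, _, _⟩ := id hrun
  rcases Nat.eq_or_lt_of_le hp1 with hp | hp2
  · -- p = 1
    have hp' : p = 1 := hp.symm
    subst hp'
    refine ⟨{i + 1, i + 2}, by simp, ?_, 1, hrun, ?_⟩
    · intro k hk
      simp only [Finset.mem_insert, Finset.mem_singleton] at hk
      rcases hk with rfl | rfl <;> omega
    · intro k hk
      simp only [Finset.mem_insert, Finset.mem_singleton] at hk
      have hsq : ∀ m, i ≤ m → m + 1 ≤ j → u m = u (m + 1) := hper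
      rcases hk with rfl | rfl
      · refine ⟨⟨le_rfl, by omega, ?_, Or.inl rfl⟩, by omega, by omega⟩
        intro l hl
        interval_cases l
        have := hsq i le_rfl (by omega)
        simpa using this
      · refine ⟨⟨le_rfl, by omega, ?_, Or.inl rfl⟩, by omega, by omega⟩
        intro l hl
        interval_cases l
        have := hsq (i + 1) (by omega) (by omega)
        simpa using this
  · -- p ≥ 2
    letI : LinearOrder A := IsWellOrder.linearOrder WellOrderingRel
    haveI : NeZero p := ⟨by omega⟩
    obtain ⟨x₀, hx₀⟩ := exists_lexLe_min (A := A) (fun x : ZMod p => Iword u i p x)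
    obtain ⟨x₁, hx₁⟩ := exists_lexLe_min (A := Aᵒᵈ) (fun x : ZMod p => Iword u i p x)
    have hne : x₀ ≠ x₁ := by
      rintro rfl
      have hall : ∀ y, Iword u i p x₀ = Iword u i p y := fun y =>
        lexLe_antisymm (hx₀ y) (lexLe_dual (hx₁ y))
      have hsh := shift_of_Iword_eq (hall (x₀ - (1 : ZMod p)))
      have hshift : ∀ y : ZMod p, phi u i p (y + ((1 : ℕ) : ZMod p)) = phi u i p y := by
        intro y
        have := hsh (y + (1 : ZMod p))
        rw [show y + (1 : ZMod p) + (x₀ - 1 - x₀) = y by ring] at this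
        push_cast
        exact this.symm
      exact no_shift hrun le_rfl (by omega) hshift
    have h₀ := handle_of_min hrun hp2 hcube hx₀
    have h₁ : Handle u (i + x₁.val + p) p :=
      handle_of_min (A := Aᵒᵈ) hrun hp2 hcube hx₁
    have hvne : x₀.val ≠ x₁.val := fun hv => hne (ZMod.val_injective p hv)
    have hv₀ : x₀.val < p := ZMod.val_lt x₀
    have hv₁ : x₁.val < p := ZMod.val_lt x₁
    refine ⟨{i + x₀.val + p, i + x₁.val + p}, ?_, ?_, p, hrun, ?_⟩
    · rw [Finset.card_insert_of_notMem (by simp; omega)]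
      simp
    · intro k hk
      simp only [Finset.mem_insert, Finset.mem_singleton] at hk
      rcases hk with rfl | rfl <;> omega
    · intro k hk
      simp only [Finset.mem_insert, Finset.mem_singleton] at hk
      rcases hk with rfl | rfl
      · exact ⟨h₀, by omega, by omega⟩
      · exact ⟨h₁, by omega, by omega⟩

end HPAux

theorem hp_runs_handles {A : Type*} (u : ℕ → A) (n : ℕ) :
    (∃ F : ℕ × ℕ → Finset ℕ,
      (∀ i j, IsHPRun u n i j → 2 ≤ (F (i, j)).card ∧
        F (i, j) ⊆ Finset.Ioc i j) ∧
      (∀ q₁ q₂ : ℕ × ℕ, IsHPRun u n q₁.1 q₁.2 → IsHPRun u n q₂.1 q₂.2 →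
        q₁ ≠ q₂ → Disjoint (F q₁) (F q₂))) ∧
    {q : ℕ × ℕ | IsHPRun u n q.1 q.2}.ncard ≤ (n - 1) / 2 := by
  classical
  have key : ∀ q : ℕ × ℕ, ∃ s : Finset ℕ,
      IsHPRun u n q.1 q.2 →
        (2 ≤ s.card ∧ s ⊆ Finset.Ioc q.1 q.2 ∧
          ∃ p, IsRunWith u n q.1 q.2 p ∧
            ∀ k ∈ s, HPAux.Handle u k p ∧ q.1 + p ≤ k ∧ k + p ≤ q.2 + 1) := by
    intro q
    by_cases h : IsHPRun u n q.1 q.2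
    · obtain ⟨s, h1, h2, h3⟩ := HPAux.exists_handles u h
      refine ⟨s, fun _ => ⟨h1, ?_, h3⟩⟩
      intro k hk
      obtain ⟨hk1, hk2⟩ := h2 k hk
      exact Finset.mem_Ioc.mpr ⟨hk1, hk2⟩
    · exact ⟨∅, fun h' => absurd h' h⟩
  choose F hF using key
  have hdis : ∀ q₁ q₂ : ℕ × ℕ, IsHPRun u n q₁.1 q₁.2 → IsHPRun u n q₂.1 q₂.2 →
      q₁ ≠ q₂ → Disjoint (F q₁) (F q₂) := by
    intro q₁ q₂ h1 h2 hne
    rw [Finset.disjoint_left]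
    intro k hk1 hk2
    obtain ⟨_, _, p, hrun, hh⟩ := hF q₁ h1
    obtain ⟨_, _, p', hrun', hh'⟩ := hF q₂ h2
    obtain ⟨hk, hki, hkj⟩ := hh k hk1
    obtain ⟨hk', hki', hkj'⟩ := hh' k hk2
    have hpp : p = p' := by
      by_contra hne'
      rcases Nat.lt_or_ge p p' with hc | hc
      · exact HPAux.handle_not_lt hk hk' hc
      · exact HPAux.handle_not_lt hk' hk (by omega)
    subst hpp
    have hp1 : 1 ≤ p := hk.1
    have := HPAux.runs_eq_of_overlap hrun hrun' (m := k - p)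
      (by omega) (by omega) (by omega) (by omega)
    exact hne (Prod.ext this.1 this.2)
  refine ⟨⟨F, fun i j h => ⟨(hF (i, j) h).1, (hF (i, j) h).2.1⟩, hdis⟩, ?_⟩
  set S := {q : ℕ × ℕ | IsHPRun u n q.1 q.2} with hS
  by_cases hfin : S.Finite
  · set T := hfin.toFinset with hT
    have hTmem : ∀ q ∈ T, IsHPRun u n q.1 q.2 := by
      intro q hq
      rw [hT, Set.Finite.mem_toFinset] at hq
      exact hq
    have hsub : T.biUnion F ⊆ Finset.Icc 1 (n - 1) := by
      intro k hk
      rw [Finset.mem_biUnion] at hk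
      obtain ⟨q, hq, hkF⟩ := hk
      have h := hTmem q hq
      have hIoc := (hF q h).2.1 hkF
      rw [Finset.mem_Ioc] at hIoc
      have hjn : q.2 < n := by
        obtain ⟨p, hrun, _⟩ := h
        exact hrun.2.1
      rw [Finset.mem_Icc]
      omega
    have hcard : (T.biUnion F).card = ∑ q ∈ T, (F q).card := by
      apply Finset.card_biUnion
      intro q₁ hq₁ q₂ hq₂ hne
      exact hdis q₁ q₂ (hTmem q₁ hq₁) (hTmem q₂ hq₂) hne
    have hlow : 2 * T.card ≤ ∑ q ∈ T, (F q).card := by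
      calc 2 * T.card = ∑ _q ∈ T, 2 := by
            rw [Finset.sum_const, smul_eq_mul, mul_comm]
        _ ≤ ∑ q ∈ T, (F q).card :=
            Finset.sum_le_sum fun q hq => (hF q (hTmem q hq)).1
    have hup : (T.biUnion F).card ≤ n - 1 := by
      have := Finset.card_le_card hsub
      simpa [Nat.card_Icc] using this
    have hncard : S.ncard = T.card := Set.ncard_eq_toFinset_card S hfin
    rw [hncard, Nat.le_div_iff_mul_le (by norm_num)]
    omega
  · rw [Set.Infinite.ncard hfin]
    exact Nat.zero_le _
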